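/- (Exponential decay for defective renewal equations, used in the proof of Theorem 3.2(a).) If κ ∈ (0, 2γ) satisfies ∫₀^∞ e^{κs} g(s) ds < 1, then e^{κt}·y(t) → 0 as t → ∞. -/

import Mathlib

open MeasureTheory Filter Set

/-- Exponential decay for defective renewal equations, used in the proof of
Theorem 3.2(a). -/
theorem stmt6 (C γ κ : ℝ) (hC : 0 < C) (hγ : 0 < γ) (hκpos : 0 < κ) (hκlt : κ < 2 * γ)
    (f g : ℝ → ℝ) (hfmeas : Measurable f) (hgmeas : Measurable g)
    (hfnn : ∀ t ≥ (0:ℝ), 0 ≤ f t) (hgnn : ∀ t ≥ (0:ℝ), 0 ≤ g t)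
    (hfb : ∀ t ≥ (0:ℝ), f t ≤ C * Real.exp (-(2 * γ) * t))
    (hgb : ∀ t ≥ (0:ℝ), g t ≤ C * Real.exp (-(2 * γ) * t))
    (y : ℝ → ℝ) (hymeas : Measurable y) (hynn : ∀ t ≥ (0:ℝ), 0 ≤ y t)
    (hybdd : ∀ T : ℝ, ∃ K : ℝ, ∀ t ∈ Set.Icc (0:ℝ) T, y t ≤ K)
    (hren : ∀ t ≥ (0:ℝ), y t = f t + ∫ s in (0:ℝ)..t, g (t - s) * y s)
    (hdefective : (∫ s in Set.Ioi (0:ℝ), Real.exp (κ * s) * g s) < 1) :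
    Tendsto (fun t => Real.exp (κ * t) * y t) atTop (nhds 0) := by
  set G : ℝ → ℝ := fun u => Real.exp (κ * u) * g u with hGdef
  set z : ℝ → ℝ := fun t => Real.exp (κ * t) * y t with hzdef
  have hGnn : ∀ u ≥ (0:ℝ), 0 ≤ G u := fun u hu =>
    mul_nonneg (Real.exp_nonneg _) (hgnn u hu)
  have hznn : ∀ t ≥ (0:ℝ), 0 ≤ z t := fun t ht =>
    mul_nonneg (Real.exp_nonneg _) (hynn t ht)
  have hGmeas : Measurable G := (Real.measurable_exp.comp (measurable_const_mul κ)).mul hgmeas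
  have hzmeas : Measurable z := (Real.measurable_exp.comp (measurable_const_mul κ)).mul hymeas
  -- integrability of G on Ioi 0
  have hGint : IntegrableOn G (Ioi (0:ℝ)) := by
    refine Integrable.mono' ((exp_neg_integrableOn_Ioi 0 (show (0:ℝ) < 2*γ - κ by linarith)).const_mul C) hGmeas.aestronglyMeasurable ?_
    refine (ae_restrict_iff' measurableSet_Ioi).2 (ae_of_all _ fun u hu => ?_)
    have hu0 : (0:ℝ) ≤ u := le_of_lt hu
    rw [Real.norm_eq_abs, abs_of_nonneg (hGnn u hu0)]
    calc G u ≤ Real.exp (κ * u) * (C * Real.exp (-(2*γ) * u)) :=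
          mul_le_mul_of_nonneg_left (hgb u hu0) (Real.exp_nonneg _)
      _ = C * Real.exp (-(2*γ - κ) * u) := by
          rw [mul_comm, mul_assoc, ← Real.exp_add]; ring_nf
  set ρ : ℝ := ∫ s in Ioi (0:ℝ), G s with hρdef
  have hρnn : 0 ≤ ρ := setIntegral_nonneg measurableSet_Ioi fun u hu => hGnn u (le_of_lt hu)
  have hρlt : ρ < 1 := hdefective
  have h1ρ : 0 < 1 - ρ := by linarith
  -- interval integrability of G
  have hGii : ∀ a b : ℝ, 0 ≤ a → a ≤ b → IntervalIntegrable G volume a b := by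
    intro a b ha hab
    exact (intervalIntegrable_iff_integrableOn_Ioc_of_le hab).2
      (hGint.mono_set fun x hx => lt_of_le_of_lt ha hx.1)
  -- the interval integral of G is at most ρ
  have hGle : ∀ a b : ℝ, 0 ≤ a → a ≤ b → (∫ u in a..b, G u) ≤ ρ := by
    intro a b ha hab
    rw [intervalIntegral.integral_of_le hab]
    refine setIntegral_mono_set hGint ?_ (HasSubset.Subset.eventuallyLE ?_)
    · exact (ae_restrict_iff' measurableSet_Ioi).2 (ae_of_all _ fun u hu => hGnn u (le_of_lt hu))
    · exact fun x hx => lt_of_le_of_lt ha hx.1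
  -- integrability of the reflected kernel
  have hGsub : ∀ t ≥ (0:ℝ), IntegrableOn (fun s => G (t - s)) (Ioc 0 t) := by
    intro t ht
    have h := (hGii 0 t le_rfl ht).comp_sub_left t
    simp only [sub_zero, sub_self] at h
    exact (intervalIntegrable_iff_integrableOn_Ioc_of_le ht).1 h.symm
  -- the renewal equation in terms of z
  have hzren : ∀ t ≥ (0:ℝ), z t = Real.exp (κ*t) * f t + ∫ s in (0:ℝ)..t, G (t - s) * z s := by
    intro t ht
    have h1 : z t = Real.exp (κ*t) * f t + Real.exp (κ*t) * ∫ s in (0:ℝ)..t, g (t-s) * y s := by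
      simp only [hzdef]; rw [hren t ht]; ring
    rw [h1]
    congr 1
    rw [← intervalIntegral.integral_const_mul]
    refine intervalIntegral.integral_congr fun s _ => ?_
    simp only [hGdef, hzdef]
    rw [show Real.exp (κ*t) = Real.exp (κ*(t-s)) * Real.exp (κ*s) by
      rw [← Real.exp_add]; congr 1; ring]
    ring
  -- front term bound
  have hfront : ∀ t ≥ (0:ℝ), Real.exp (κ*t) * f t ≤ C * Real.exp ((κ - 2*γ) * t) := by
    intro t ht
    calc Real.exp (κ*t) * f t ≤ Real.exp (κ*t) * (C * Real.exp (-(2*γ) * t)) :=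
          mul_le_mul_of_nonneg_left (hfb t ht) (Real.exp_nonneg _)
      _ = C * Real.exp ((κ - 2*γ) * t) := by
          rw [mul_comm, mul_assoc, ← Real.exp_add]; ring_nf
  have hfrontC : ∀ t ≥ (0:ℝ), Real.exp (κ*t) * f t ≤ C := by
    intro t ht
    refine (hfront t ht).trans ?_
    have : Real.exp ((κ - 2*γ) * t) ≤ 1 := by
      rw [Real.exp_le_one_iff]
      have : κ - 2*γ ≤ 0 := by linarith
      nlinarith
    nlinarith
  -- key inequality
  have key : ∀ t ≥ (0:ℝ), ∀ M : ℝ, 0 ≤ M → (∀ s ∈ Icc (0:ℝ) t, z s ≤ M) →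
      z t ≤ C + ρ * M := by
    intro t ht M hM hMle
    rw [hzren t ht]
    have hint : (∫ s in (0:ℝ)..t, G (t - s) * z s) ≤ ρ * M := by
      rw [intervalIntegral.integral_of_le ht]
      have h1 : (∫ s in Ioc (0:ℝ) t, G (t - s) * z s) ≤ ∫ s in Ioc (0:ℝ) t, G (t - s) * M := by
        refine integral_mono_of_nonneg ?_ ((hGsub t ht).mul_const M) ?_
        · refine (ae_restrict_iff' measurableSet_Ioc).2 (ae_of_all _ fun s hs => ?_)
          exact mul_nonneg (hGnn _ (by linarith [hs.2])) (hznn _ (le_of_lt hs.1))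
        · refine (ae_restrict_iff' measurableSet_Ioc).2 (ae_of_all _ fun s hs => ?_)
          exact mul_le_mul_of_nonneg_left (hMle s ⟨le_of_lt hs.1, hs.2⟩) (hGnn _ (by linarith [hs.2]))
      refine h1.trans ?_
      rw [← intervalIntegral.integral_of_le ht, intervalIntegral.integral_mul_const,
        intervalIntegral.integral_comp_sub_left G t, sub_self, sub_zero]
      exact mul_le_mul_of_nonneg_right (hGle 0 t le_rfl ht) hM
    linarith [hfrontC t ht]
  -- global boundedness
  set B : ℝ := C / (1 - ρ) with hBdef
  have hBpos : 0 < B := div_pos hC h1ρ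
  have hzB : ∀ t ≥ (0:ℝ), z t ≤ B := by
    intro t ht
    obtain ⟨K, hK⟩ := hybdd t
    have hSne : (z '' Icc (0:ℝ) t).Nonempty := ⟨z 0, ⟨0, ⟨le_refl _, ht⟩, rfl⟩⟩
    have hKnn : 0 ≤ max K 0 := le_max_right _ _
    have hSbdd : BddAbove (z '' Icc (0:ℝ) t) := by
      refine ⟨Real.exp (κ*t) * max K 0, ?_⟩
      rintro _ ⟨s, hs, rfl⟩
      have h1 : y s ≤ max K 0 := (hK s hs).trans (le_max_left _ _)
      calc z s ≤ Real.exp (κ*s) * max K 0 := mul_le_mul_of_nonneg_left h1 (Real.exp_nonneg _)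
        _ ≤ Real.exp (κ*t) * max K 0 := by
            refine mul_le_mul_of_nonneg_right ?_ hKnn
            exact Real.exp_le_exp.2 (mul_le_mul_of_nonneg_left hs.2 (le_of_lt hκpos))
    set M := sSup (z '' Icc (0:ℝ) t) with hMdef
    have hM0 : 0 ≤ M := (hznn 0 le_rfl).trans (le_csSup hSbdd ⟨0, ⟨le_refl _, ht⟩, rfl⟩)
    have hMle : ∀ s ∈ Icc (0:ℝ) t, z s ≤ M := fun s hs => le_csSup hSbdd ⟨s, hs, rfl⟩
    have hMle2 : M ≤ C + ρ * M := by
      refine csSup_le hSne ?_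
      rintro _ ⟨s, hs, rfl⟩
      exact key s hs.1 M hM0 fun u hu => hMle u ⟨hu.1, hu.2.trans hs.2⟩
    have hMB : M ≤ B := by
      rw [hBdef, le_div_iff₀ h1ρ]; nlinarith
    exact (hMle t ⟨ht, le_rfl⟩).trans hMB
  -- integrability of the product on Ioc 0 t
  have hprod : ∀ t ≥ (0:ℝ), IntegrableOn (fun s => G (t - s) * z s) (Ioc 0 t) := by
    intro t ht
    refine Integrable.mono' ((hGsub t ht).const_mul B)
      ((hGmeas.comp (measurable_const.sub measurable_id)).mul hzmeas).aestronglyMeasurable ?_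
    refine (ae_restrict_iff' measurableSet_Ioc).2 (ae_of_all _ fun s hs => ?_)
    have h1 : (0:ℝ) ≤ t - s := by linarith [hs.2]
    have h2 : (0:ℝ) ≤ s := le_of_lt hs.1
    rw [Real.norm_eq_abs, abs_of_nonneg (mul_nonneg (hGnn _ h1) (hznn _ h2))]
    calc G (t-s) * z s ≤ G (t-s) * B := mul_le_mul_of_nonneg_left (hzB s h2) (hGnn _ h1)
      _ = B * G (t-s) := mul_comm _ _
  -- limsup setup
  have hbddAbove : IsBoundedUnder (· ≤ ·) atTop z :=
    ⟨B, eventually_map.2 ((eventually_ge_atTop (0:ℝ)).mono fun t ht => hzB t ht)⟩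
  have hbddBelow : IsBoundedUnder (· ≥ ·) atTop z :=
    ⟨0, eventually_map.2 ((eventually_ge_atTop (0:ℝ)).mono fun t ht => hznn t ht)⟩
  set L : ℝ := limsup z atTop with hLdef
  have hL0 : 0 ≤ L :=
    le_limsup_of_frequently_le (((eventually_ge_atTop (0:ℝ)).mono fun t ht => hznn t ht).frequently) hbddAbove
  -- key limsup inequality
  have hkey : ∀ ε > (0:ℝ), L ≤ ρ * (L + ε) + ε := by
    intro ε hε
    have hLε : ∀ᶠ t in atTop, z t < L + ε :=
      eventually_lt_of_limsup_lt (by linarith) hbddAbove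
    obtain ⟨T₀, hT₀⟩ := eventually_atTop.1 hLε
    set T : ℝ := max T₀ 0 with hTdef
    have hT0 : (0:ℝ) ≤ T := le_max_right _ _
    have hTz : ∀ s ≥ T, z s < L + ε := fun s hs => hT₀ s ((le_max_left _ _).trans hs)
    -- tail of the integral of G tends to 0
    have htail : Tendsto (fun t => ∫ u in (t - T)..t, G u) atTop (nhds 0) := by
      have h1 : Tendsto (fun t : ℝ => ∫ u in (0:ℝ)..t, G u) atTop (nhds ρ) :=
        intervalIntegral_tendsto_integral_Ioi 0 hGint tendsto_id
      have h2 : Tendsto (fun t : ℝ => ∫ u in (0:ℝ)..(t - T), G u) atTop (nhds ρ) :=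
        intervalIntegral_tendsto_integral_Ioi 0 hGint (tendsto_atTop_add_const_right _ (-T)
          tendsto_id)
      have h3 := h1.sub h2
      rw [sub_self] at h3
      refine h3.congr' ?_
      filter_upwards [eventually_ge_atTop T] with t ht
      have htt : (0:ℝ) ≤ t - T := by linarith
      exact intervalIntegral.integral_interval_sub_left (hGii 0 t le_rfl (by linarith))
        (hGii 0 (t - T) le_rfl htt)
    -- the small terms are eventually ≤ ε
    have hexp : Tendsto (fun t => C * Real.exp ((κ - 2*γ) * t)) atTop (nhds 0) := by
      have : Tendsto (fun t : ℝ => Real.exp ((κ - 2*γ) * t)) atTop (nhds 0) := by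
        refine Real.tendsto_exp_atBot.comp ?_
        exact Tendsto.const_mul_atTop_of_neg (by linarith) tendsto_id
      simpa using this.const_mul C
    have hsum : Tendsto (fun t => C * Real.exp ((κ - 2*γ) * t) + B * ∫ u in (t - T)..t, G u)
        atTop (nhds 0) := by
      simpa using hexp.add (htail.const_mul B)
    have hsmall : ∀ᶠ t in atTop,
        C * Real.exp ((κ - 2*γ) * t) + B * (∫ u in (t - T)..t, G u) < ε :=
      hsum.eventually (gt_mem_nhds hε)
    -- main eventual bound
    have hLε0 : (0:ℝ) ≤ L + ε := by linarith
    have hev : ∀ᶠ t in atTop, z t ≤ ρ * (L + ε) + ε := by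
      filter_upwards [hsmall, eventually_ge_atTop T] with t ht hTt
      have ht0 : (0:ℝ) ≤ t := hT0.trans hTt
      have htT : (0:ℝ) ≤ t - T := by linarith
      -- split the integral
      have hii1 : IntervalIntegrable (fun s => G (t - s) * z s) volume 0 T :=
        (intervalIntegrable_iff_integrableOn_Ioc_of_le hT0).2
          ((hprod t ht0).mono_set (Ioc_subset_Ioc le_rfl hTt))
      have hii2 : IntervalIntegrable (fun s => G (t - s) * z s) volume T t :=
        (intervalIntegrable_iff_integrableOn_Ioc_of_le hTt).2
          ((hprod t ht0).mono_set (Ioc_subset_Ioc hT0 le_rfl))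
      have hsplit : (∫ s in (0:ℝ)..t, G (t - s) * z s)
          = (∫ s in (0:ℝ)..T, G (t - s) * z s) + ∫ s in T..t, G (t - s) * z s :=
        (intervalIntegral.integral_add_adjacent_intervals hii1 hii2).symm
      -- first piece
      have hp1 : (∫ s in (0:ℝ)..T, G (t - s) * z s) ≤ B * ∫ u in (t - T)..t, G u := by
        have h1 : (∫ s in Ioc (0:ℝ) T, G (t - s) * z s) ≤ ∫ s in Ioc (0:ℝ) T, G (t - s) * B := by
          refine integral_mono_of_nonneg ?_
            (((hGsub t ht0).mono_set (Ioc_subset_Ioc le_rfl hTt)).mul_const B) ?_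
          · refine (ae_restrict_iff' measurableSet_Ioc).2 (ae_of_all _ fun s hs => ?_)
            exact mul_nonneg (hGnn _ (by linarith [hs.2])) (hznn _ (le_of_lt hs.1))
          · refine (ae_restrict_iff' measurableSet_Ioc).2 (ae_of_all _ fun s hs => ?_)
            exact mul_le_mul_of_nonneg_left (hzB s (le_of_lt hs.1))
              (hGnn _ (by linarith [hs.2]))
        rw [intervalIntegral.integral_of_le hT0]
        refine h1.trans ?_
        rw [← intervalIntegral.integral_of_le hT0, intervalIntegral.integral_mul_const,
          intervalIntegral.integral_comp_sub_left G t, sub_zero, mul_comm]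
      -- second piece
      have hp2 : (∫ s in T..t, G (t - s) * z s) ≤ ρ * (L + ε) := by
        have h1 : (∫ s in Ioc T t, G (t - s) * z s) ≤ ∫ s in Ioc T t, G (t - s) * (L + ε) := by
          refine integral_mono_of_nonneg ?_
            (((hGsub t ht0).mono_set (Ioc_subset_Ioc hT0 le_rfl)).mul_const (L + ε)) ?_
          · refine (ae_restrict_iff' measurableSet_Ioc).2 (ae_of_all _ fun s hs => ?_)
            exact mul_nonneg (hGnn _ (by linarith [hs.2])) (hznn _ (hT0.trans (le_of_lt hs.1)))
          · refine (ae_restrict_iff' measurableSet_Ioc).2 (ae_of_all _ fun s hs => ?_)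
            exact mul_le_mul_of_nonneg_left (le_of_lt (hTz s (le_of_lt hs.1)))
              (hGnn _ (by linarith [hs.2]))
        rw [intervalIntegral.integral_of_le hTt]
        refine h1.trans ?_
        rw [← intervalIntegral.integral_of_le hTt, intervalIntegral.integral_mul_const,
          intervalIntegral.integral_comp_sub_left G t]
        have h2 : (∫ u in (t - t)..(t - T), G u) ≤ ρ := by
          rw [sub_self]; exact hGle 0 (t - T) le_rfl htT
        exact (mul_le_mul_of_nonneg_right h2 hLε0).trans_eq rfl
      calc z t = Real.exp (κ*t) * f t + ∫ s in (0:ℝ)..t, G (t - s) * z s := hzren t ht0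
        _ ≤ C * Real.exp ((κ - 2*γ) * t)
            + ((∫ s in (0:ℝ)..T, G (t - s) * z s) + ∫ s in T..t, G (t - s) * z s) := by
            rw [← hsplit]; exact add_le_add_left (hfront t ht0) _
        _ ≤ C * Real.exp ((κ - 2*γ) * t) + (B * (∫ u in (t - T)..t, G u) + ρ * (L + ε)) :=
            add_le_add_right (add_le_add hp1 hp2) _
        _ ≤ ρ * (L + ε) + ε := by linarith
    exact limsup_le_of_le hbddBelow.isCoboundedUnder_le hev
  -- conclude L ≤ 0
  have hLle : L ≤ 0 := by
    by_contra h
    push_neg at h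
    have hεpos : 0 < (1 - ρ) * L / (2 * (ρ + 1)) := by positivity
    have h2 := hkey _ hεpos
    have hρ1 : (0:ℝ) < ρ + 1 := by linarith
    have hεeq : (ρ + 1) * ((1 - ρ) * L / (2 * (ρ + 1))) = (1 - ρ) * L / 2 := by
      field_simp
    nlinarith [h2, hεeq, mul_pos h1ρ h]
  have hliminf : (0:ℝ) ≤ liminf z atTop :=
    le_liminf_of_le hbddAbove.isCoboundedUnder_ge
      ((eventually_ge_atTop (0:ℝ)).mono fun t ht => hznn t ht)
  exact tendsto_of_le_liminf_of_limsup_le hliminf hLle hbddAbove hbddBelow
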